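/- arXiv:1704.06872 — 4 statements merged into one kernel-verified Lean document; each statement's English description precedes it below -/
import Mathlib

section
/- Let d ≥ 1, let x₀ ∈ ℝ^d, and let d̂ ∈ ℝ^d be a unit vector. Write r = x − x₀ and define the dipole field h : ℝ^d ∖ {x₀} → ℝ^d by h(x) = (d·(r rᵀ)/‖r‖² − I) d̂ / ‖r‖^d, where I is the identity map and (r rᵀ) v = ⟨r, v⟩ r. Then h is divergence free on ℝ^d ∖ {x₀}: for every x ≠ x₀, div h(x) = Σ_{i=1}^d ∂h_i/∂x_i(x) = 0. -/
open RealInnerProductSpace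

/-- The dipole field `h(x) = (d (r rᵀ)/‖r‖² − I) d̂ / ‖r‖^d` with `r = x − x₀`,
where `(r rᵀ) v = ⟨r, v⟩ r` and `I` is the identity. -/
noncomputable def dipoleField {d : ℕ} (x₀ dv : EuclideanSpace ℝ (Fin d)) :
    EuclideanSpace ℝ (Fin d) → EuclideanSpace ℝ (Fin d) := fun x =>
  (‖x - x₀‖ ^ d)⁻¹ •
    ((((d : ℝ) * ⟪x - x₀, dv⟫) / ‖x - x₀‖ ^ 2) • (x - x₀) - dv)

/-- The dipole field is divergence free away from the dipole location:
`div h(x) = ∑ i ⟨Dh(x) eᵢ, eᵢ⟩ = 0` for `x ≠ x₀`. -/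
theorem dipoleField_div_eq_zero (d : ℕ) (hd : 1 ≤ d)
    (x₀ dv : EuclideanSpace ℝ (Fin d)) (hdv : ‖dv‖ = 1) :
    ∀ x : EuclideanSpace ℝ (Fin d), x ≠ x₀ →
      ∑ i : Fin d,
        ⟪fderiv ℝ (dipoleField x₀ dv) x (EuclideanSpace.single i 1),
          EuclideanSpace.single i 1⟫ = 0 := by
  intro x hx
  have hr : x - x₀ ≠ 0 := sub_ne_zero.mpr hx
  have hR : (0:ℝ) < ‖x - x₀‖ := norm_pos_iff.mpr hr
  have hsub : HasFDerivAt (fun y : EuclideanSpace ℝ (Fin d) => y - x₀)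
      (ContinuousLinearMap.id ℝ _) x := (hasFDerivAt_id x).sub_const x₀
  have hsq : HasFDerivAt (fun y : EuclideanSpace ℝ (Fin d) => ‖y - x₀‖ ^ 2)
      (2 • (innerSL ℝ (x - x₀)).comp (ContinuousLinearMap.id ℝ _)) x := hsub.norm_sq
  have hg : HasDerivAt (fun t : ℝ => (Real.sqrt t ^ d)⁻¹)
      (-(((d:ℝ) * Real.sqrt (‖x-x₀‖^2) ^ (d-1) * (1/(2*Real.sqrt (‖x-x₀‖^2)))) / (Real.sqrt (‖x-x₀‖^2) ^ d) ^ 2))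
      (‖x - x₀‖ ^ 2) := by
    have h0 : (‖x - x₀‖^2 : ℝ) ≠ 0 := by positivity
    have := ((Real.hasDerivAt_sqrt h0).pow d).inv
      (pow_ne_zero _ (by beta_reduce; rw [Real.sqrt_sq (norm_nonneg _)]; exact hR.ne'))
    simpa only [Pi.pow_def, Pi.inv_def, neg_div] using this
  have hf : HasFDerivAt (fun y : EuclideanSpace ℝ (Fin d) => (‖y - x₀‖ ^ d)⁻¹)
      ((-(((d:ℝ) * ‖x-x₀‖ ^ (d-1) * (1/(2*‖x-x₀‖))) / (‖x-x₀‖ ^ d) ^ 2)) •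
        (2 • (innerSL ℝ (x - x₀)).comp (ContinuousLinearMap.id ℝ _))) x := by
    have := hg.comp_hasFDerivAt x hsq
    simp only [Function.comp_def, Real.sqrt_sq (norm_nonneg _)] at this
    exact this
  have hinv2 : HasFDerivAt (fun y : EuclideanSpace ℝ (Fin d) => (‖y - x₀‖ ^ 2)⁻¹)
      ((-((‖x - x₀‖^2) ^ 2)⁻¹) • (2 • (innerSL ℝ (x - x₀)).comp (ContinuousLinearMap.id ℝ _))) x := by
    have h0 : (‖x - x₀‖^2 : ℝ) ≠ 0 := by positivity
    exact (hasDerivAt_inv h0).comp_hasFDerivAt x hsq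
  have hinner : HasFDerivAt (fun y : EuclideanSpace ℝ (Fin d) => ⟪y - x₀, dv⟫)
      (((innerSL ℝ).flip dv).comp (ContinuousLinearMap.id ℝ _)) x :=
    ((innerSL ℝ).flip dv).hasFDerivAt.comp x hsub
  have hnum := hinner.const_mul (d:ℝ)
  have ha := hnum.mul hinv2
  simp only [Pi.mul_def, ← div_eq_mul_inv] at ha
  have hu := (ha.smul hsub).sub_const dv
  have H := hf.smul hu
  have H' : HasFDerivAt (dipoleField x₀ dv) _ x := H
  rw [H'.fderiv]
  simp only [ContinuousLinearMap.add_apply, ContinuousLinearMap.coe_smul', Pi.smul_apply,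
    ContinuousLinearMap.smulRight_apply, ContinuousLinearMap.comp_apply,
    ContinuousLinearMap.coe_id', id_eq, ContinuousLinearMap.flip_apply, innerSL_apply_apply,
    ContinuousLinearMap.smul_apply, smul_eq_mul, inner_add_left, inner_sub_left,
    real_inner_smul_left, inner_smul_left, conj_trivial, two_smul,
    EuclideanSpace.inner_single_left, EuclideanSpace.inner_single_right, one_mul, mul_one,
    EuclideanSpace.single_apply, if_pos, Pi.smul_apply', PiLp.smul_apply, PiLp.sub_apply]
  have hA : ∑ i : Fin d, (x i - x₀ i) * (x i - x₀ i) = ‖x - x₀‖ ^ 2 := by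
    rw [← real_inner_self_eq_norm_sq]
    simp only [PiLp.inner_apply, RCLike.inner_apply, conj_trivial, PiLp.sub_apply]
  have hB : ∑ i : Fin d, (x i - x₀ i) * dv i = ⟪x, dv⟫ - ⟪x₀, dv⟫ := by
    rw [← inner_sub_left]
    simp [PiLp.inner_apply, RCLike.inner_apply, conj_trivial, mul_comm]
  have key : ∀ a b : ℝ,
      (‖x - x₀‖ ^ d)⁻¹ *
          ((d:ℝ) * (⟪x, dv⟫ - ⟪x₀, dv⟫) / ‖x - x₀‖ ^ 2 +
            ((d:ℝ) * (⟪x, dv⟫ - ⟪x₀, dv⟫) * (-((‖x - x₀‖ ^ 2) ^ 2)⁻¹ * (a + a)) +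
                (‖x - x₀‖ ^ 2)⁻¹ * ((d:ℝ) * b)) * a) +
        -((d:ℝ) * ‖x - x₀‖ ^ (d - 1) * (1 / (2 * ‖x - x₀‖)) / (‖x - x₀‖ ^ d) ^ 2) * (a + a) *
          ((d:ℝ) * (⟪x, dv⟫ - ⟪x₀, dv⟫) / ‖x - x₀‖ ^ 2 * a - b) =
      ((‖x - x₀‖ ^ d)⁻¹ * (-2 * (d:ℝ) * (⟪x, dv⟫ - ⟪x₀, dv⟫) * ((‖x - x₀‖ ^ 2) ^ 2)⁻¹) +
          -((d:ℝ) * ‖x - x₀‖ ^ (d - 1) * (1 / (2 * ‖x - x₀‖)) / (‖x - x₀‖ ^ d) ^ 2) * 2 *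
            ((d:ℝ) * (⟪x, dv⟫ - ⟪x₀, dv⟫) / ‖x - x₀‖ ^ 2)) * (a * a) +
        ((‖x - x₀‖ ^ d)⁻¹ * (‖x - x₀‖ ^ 2)⁻¹ * (d:ℝ) +
          ((d:ℝ) * ‖x - x₀‖ ^ (d - 1) * (1 / (2 * ‖x - x₀‖)) / (‖x - x₀‖ ^ d) ^ 2) * 2) * (a * b) +
        (‖x - x₀‖ ^ d)⁻¹ * ((d:ℝ) * (⟪x, dv⟫ - ⟪x₀, dv⟫) / ‖x - x₀‖ ^ 2) := by
    intro a b; ring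
  simp only [key]
  rw [Finset.sum_add_distrib, Finset.sum_add_distrib, ← Finset.mul_sum, ← Finset.mul_sum, hA, hB,
    Finset.sum_const, Finset.card_univ, Fintype.card_fin, nsmul_eq_mul]
  have hpow : ‖x - x₀‖ ^ (d - 1) * ‖x - x₀‖ = ‖x - x₀‖ ^ d :=
    pow_sub_one_mul (by omega) _
  rw [← hpow]
  have hAne : ‖x - x₀‖ ^ (d - 1) ≠ 0 := pow_ne_zero _ hR.ne'
  generalize ‖x - x₀‖ ^ (d - 1) = A at hAne ⊢
  field_simp
  ring
end

section
/- Let d ≥ 1, let x₀ ∈ ℝ^d, and let d̂ ∈ ℝ^d be a unit vector. Write r = x − x₀ and define the dipole field h : ℝ^d ∖ {x₀} → ℝ^d by h(x) = (d·(r rᵀ)/‖r‖² − I) d̂ / ‖r‖^d. Then h is curl free on ℝ^d ∖ {x₀}: for every x ≠ x₀ the Jacobian Dh(x) is a symmetric linear map, i.e., ⟨Dh(x) v, w⟩ = ⟨Dh(x) w, v⟩ for all v, w ∈ ℝ^d (in components, ∂h_i/∂x_j(x) = ∂h_j/∂x_i(x) for all i, j). -/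
open RealInnerProductSpace

/-- The dipole field is (minus) the gradient of the dipole potential
`z ↦ -⟪z - x₀, dv⟫ / ‖z - x₀‖ ^ d`. -/
lemma dipole_hasFDerivAt {d : ℕ} (hd : 1 ≤ d) (x₀ dv : EuclideanSpace ℝ (Fin d))
    (y : EuclideanSpace ℝ (Fin d)) (hy : y ≠ x₀) :
    HasFDerivAt (fun z : EuclideanSpace ℝ (Fin d) => -(⟪z - x₀, dv⟫ * (‖z - x₀‖ ^ d)⁻¹))
      (innerSL ℝ (dipoleField x₀ dv y)) y := by
  let E := EuclideanSpace ℝ (Fin d)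
  have hrne : y - x₀ ≠ 0 := sub_ne_zero.2 hy
  have hn0 : ‖y - x₀‖ ≠ 0 := norm_ne_zero_iff.2 hrne
  have hr : HasFDerivAt (fun z : E => z - x₀) (ContinuousLinearMap.id ℝ E) y :=
    (hasFDerivAt_id y).sub_const x₀
  have hA := hr.inner ℝ (hasFDerivAt_const dv y)
  have hq := hr.inner ℝ hr
  have hqy : ⟪y - x₀, y - x₀⟫ = ‖y - x₀‖ ^ 2 := real_inner_self_eq_norm_sq _
  have hq0 : ⟪y - x₀, y - x₀⟫ ≠ 0 := by
    rw [hqy]; positivity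
  have hN' := hq.sqrt hq0
  have heq : (fun z : E => Real.sqrt ⟪z - x₀, z - x₀⟫) = fun z : E => ‖z - x₀‖ := by
    funext z
    rw [real_inner_self_eq_norm_sq, Real.sqrt_sq (norm_nonneg _)]
  rw [heq] at hN'
  have hP := (hasDerivAt_pow d ‖y - x₀‖).comp_hasFDerivAt y hN'
  have hpne : ‖y - x₀‖ ^ d ≠ 0 := pow_ne_zero _ hn0
  have hI := (hasDerivAt_inv hpne).comp_hasFDerivAt y hP
  have hmul := (hA.mul hI).neg
  refine hmul.congr_fderiv ?_
  ext v
  obtain ⟨e, rfl⟩ : ∃ e, d = e + 1 := ⟨d - 1, (Nat.succ_pred_eq_of_pos hd).symm⟩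
  simp only [innerSL_apply_apply, dipoleField, Function.comp_def,
    ContinuousLinearMap.neg_apply, ContinuousLinearMap.add_apply,
    ContinuousLinearMap.smul_apply, ContinuousLinearMap.comp_apply,
    ContinuousLinearMap.prod_apply, ContinuousLinearMap.coe_id', id_eq,
    ContinuousLinearMap.zero_apply, fderivInnerCLM_apply, smul_eq_mul,
    real_inner_smul_left, inner_zero_right,
    real_inner_self_eq_norm_sq, Real.sqrt_sq (norm_nonneg _)]
  rw [real_inner_smul_left, Real.sqrt_sq (norm_nonneg _)]
  have expand : ⟪((↑(e + 1) * ⟪y - x₀, dv⟫ / ‖y - x₀‖ ^ 2) • (y - x₀) - dv), v⟫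
      = (↑(e + 1) * ⟪y - x₀, dv⟫ / ‖y - x₀‖ ^ 2) * ⟪y - x₀, v⟫ - ⟪dv, v⟫ := by
    rw [inner_sub_left, real_inner_smul_left]
  rw [expand, real_inner_comm v (y - x₀), real_inner_comm v dv]
  have hst : (e + 1) - 1 = e := rfl
  rw [hst]
  generalize ⟪y - x₀, dv⟫ = c
  generalize ⟪y - x₀, v⟫ = t
  generalize ⟪dv, v⟫ = u
  push_cast
  field_simp
  ring

/-- The dipole field is curl free away from the dipole location: its Jacobian
`Dh(x)` is a symmetric linear map, i.e. `⟨Dh(x) v, w⟩ = ⟨Dh(x) w, v⟩`. -/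
theorem dipoleField_jacobian_symm (d : ℕ) (hd : 1 ≤ d)
    (x₀ dv : EuclideanSpace ℝ (Fin d)) (hdv : ‖dv‖ = 1) :
    ∀ x : EuclideanSpace ℝ (Fin d), x ≠ x₀ →
      ∀ v w : EuclideanSpace ℝ (Fin d),
        ⟪fderiv ℝ (dipoleField x₀ dv) x v, w⟫
          = ⟪fderiv ℝ (dipoleField x₀ dv) x w, v⟫ := by
  intro x hx v w
  let E := EuclideanSpace ℝ (Fin d)
  have hrne : x - x₀ ≠ 0 := sub_ne_zero.2 hx
  have hn0 : ‖x - x₀‖ ≠ 0 := norm_ne_zero_iff.2 hrne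
  -- differentiability of the dipole field at `x`
  have hsub : ContDiffAt ℝ 1 (fun y : E => y - x₀) x :=
    (contDiff_id.sub contDiff_const).contDiffAt
  have hnorm : ContDiffAt ℝ 1 (fun y : E => ‖y - x₀‖) x := hsub.norm ℝ hrne
  have hinner : ContDiffAt ℝ 1 (fun y : E => ⟪y - x₀, dv⟫) x :=
    hsub.inner ℝ contDiffAt_const
  have h1 : ContDiffAt ℝ 1 (fun y : E => (‖y - x₀‖ ^ d)⁻¹) x :=
    (hnorm.pow d).inv (pow_ne_zero _ hn0)
  have h2 : ContDiffAt ℝ 1 (fun y : E => ((d : ℝ) * ⟪y - x₀, dv⟫) / ‖y - x₀‖ ^ 2) x :=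
    (contDiffAt_const.mul hinner).div (hnorm.pow 2) (pow_ne_zero _ hn0)
  have H : ContDiffAt ℝ 1 (dipoleField x₀ dv) x :=
    h1.smul ((h2.smul hsub).sub contDiffAt_const)
  have hdiffh : DifferentiableAt ℝ (dipoleField x₀ dv) x := H.differentiableAt one_ne_zero
  -- derivative of `y ↦ innerSL ℝ (dipoleField x₀ dv y)` at `x`
  have hdF : HasFDerivAt (fun y : E => innerSL ℝ (dipoleField x₀ dv y))
      ((innerSL ℝ (E := E)).comp (fderiv ℝ (dipoleField x₀ dv) x)) x :=
    (innerSL ℝ (E := E)).hasFDerivAt.comp x hdiffh.hasFDerivAt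
  have hev : ∀ᶠ y in nhds x,
      HasFDerivAt (fun z : E => -(⟪z - x₀, dv⟫ * (‖z - x₀‖ ^ d)⁻¹))
        (innerSL ℝ (dipoleField x₀ dv y)) y := by
    filter_upwards [isOpen_compl_singleton.mem_nhds hx] with y hy using
      dipole_hasFDerivAt hd x₀ dv y hy
  have hsymm := second_derivative_symmetric_of_eventually hev hdF v w
  simpa using hsymm
end

section
/- Let d ≥ 1, let Ω ⊆ ℝ^d be an open set, let n_p ≥ 1, and for i = 1, …, n_p let x_i ∈ ℝ^d ∖ closure(Ω), let d̂_i ∈ ℝ^d be unit vectors, and let α_i ∈ ℝ. Define h : Ω → ℝ^d by h(x) = Σ_{i=1}^{n_p} α_i (d·(r_i r_iᵀ)/‖r_i‖² − I) d̂_i / ‖r_i‖^d with r_i = x − x_i. Then h satisfies the magnetostatic equations on Ω: for every x ∈ Ω, the Jacobian Dh(x) is symmetric (curl h = 0) and its trace vanishes (div h = 0). -/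
open RealInnerProductSpace

section Aux

variable {E : Type*} [NormedAddCommGroup E] [InnerProductSpace ℝ E]

private lemma aux_hasFDerivAt_norm' {y : E} (hy : y ≠ 0) :
    HasFDerivAt (fun x : E => ‖x‖) ((‖y‖)⁻¹ • innerSL ℝ y) y := by
  have h1 : HasFDerivAt (fun x : E => ‖x‖ ^ 2) (2 • innerSL ℝ y) y :=
    (hasStrictFDerivAt_norm_sq y).hasFDerivAt
  have h2 : HasDerivAt Real.sqrt (1 / (2 * Real.sqrt (‖y‖ ^ 2))) (‖y‖ ^ 2) :=
    Real.hasDerivAt_sqrt (pow_ne_zero 2 (norm_ne_zero_iff.mpr hy))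
  have := h2.comp_hasFDerivAt y h1
  have heq : (fun x : E => Real.sqrt (‖x‖ ^ 2)) = fun x : E => ‖x‖ := by
    funext x; rw [Real.sqrt_sq (norm_nonneg x)]
  rw [Function.comp_def, heq] at this
  refine this.congr_fderiv (Eq.symm ?_)
  rw [Real.sqrt_sq (norm_nonneg y)]
  ext v
  have : ‖y‖ ≠ 0 := norm_ne_zero_iff.mpr hy
  simp [smul_smul]
  field_simp

/-- The explicit derivative of a dipole field term. -/
noncomputable def dipoleL (d : ℕ) (u y : E) : E →L[ℝ] E :=
  ((d : ℝ) * (‖y‖ ^ (d + 2))⁻¹) •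
      ((innerSL ℝ u).smulRight y + (innerSL ℝ y).smulRight u
        + ⟪y, u⟫ • ContinuousLinearMap.id ℝ E)
    - ((d : ℝ) * ((d : ℝ) + 2) * ⟪y, u⟫ * (‖y‖ ^ (d + 4))⁻¹) •
        (innerSL ℝ y).smulRight y

private lemma aux_dipole_hasFDerivAt (d : ℕ) (hd : 1 ≤ d) (u : E) {y : E} (hy : y ≠ 0) :
    HasFDerivAt (fun x : E => (‖x‖ ^ d)⁻¹ • (((d : ℝ) * ⟪x, u⟫ / ‖x‖ ^ 2) • x - u))
      (dipoleL d u y) y := by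
  rw [dipoleL]
  obtain ⟨k, rfl⟩ : ∃ k, d = k + 1 := ⟨d - 1, (Nat.succ_pred_eq_of_pos hd).symm⟩
  have hny : ‖y‖ ≠ 0 := norm_ne_zero_iff.mpr hy
  have hn := aux_hasFDerivAt_norm' hy
  have hxu : HasFDerivAt (fun x : E => ⟪x, u⟫) (innerSL ℝ u) y := by
    have : HasFDerivAt (fun x : E => ⟪u, x⟫) (innerSL ℝ u) y := (innerSL ℝ u).hasFDerivAt
    simpa [real_inner_comm] using this
  have hsq : HasFDerivAt (fun x : E => ‖x‖ ^ 2) (2 • innerSL ℝ y) y :=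
    (hasStrictFDerivAt_norm_sq y).hasFDerivAt
  have hsqinv := (hasDerivAt_inv (pow_ne_zero 2 hny)).comp_hasFDerivAt y hsq
  have hs := ((hxu.const_mul ((k : ℝ) + 1)).mul hsqinv)
  have hpow := (hasDerivAt_pow (k + 1) ‖y‖).comp_hasFDerivAt y hn
  have hpinv := (hasDerivAt_inv (pow_ne_zero _ hny)).comp_hasFDerivAt y hpow
  have hB := (hs.smul (hasFDerivAt_id y)).sub_const u
  have hG := hpinv.smul hB
  simp only [Function.comp_def, id_eq, id] at hG
  push_cast
  simp only [div_eq_mul_inv]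
  refine hG.congr_fderiv (Eq.symm ?_)
  ext v
  simp only [ContinuousLinearMap.coe_smul', Pi.smul_apply, ContinuousLinearMap.add_apply,
    ContinuousLinearMap.coe_sub', Pi.sub_apply, ContinuousLinearMap.smulRight_apply,
    innerSL_apply_apply, ContinuousLinearMap.coe_id', id_eq, ContinuousLinearMap.smul_apply,
    smul_eq_mul, Nat.cast_add, Nat.cast_one, ContinuousLinearMap.coe_mul, Pi.smul_apply', Pi.mul_apply,
    nsmul_eq_mul]
  rw [Nat.add_sub_cancel]
  match_scalars <;> field_simp
  all_goals try ring

private lemma aux_dipoleL_apply_inner (d : ℕ) (u y v w : E) :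
    ⟪dipoleL d u y v, w⟫ =
      ((d : ℝ) * (‖y‖ ^ (d + 2))⁻¹) * (⟪u, v⟫ * ⟪y, w⟫ + ⟪y, v⟫ * ⟪u, w⟫ + ⟪y, u⟫ * ⟪v, w⟫)
      - ((d : ℝ) * ((d : ℝ) + 2) * ⟪y, u⟫ * (‖y‖ ^ (d + 4))⁻¹) * (⟪y, v⟫ * ⟪y, w⟫) := by
  simp only [dipoleL, ContinuousLinearMap.coe_sub', Pi.sub_apply,
    ContinuousLinearMap.coe_smul', Pi.smul_apply, ContinuousLinearMap.add_apply,
    ContinuousLinearMap.smulRight_apply, innerSL_apply_apply, ContinuousLinearMap.smul_apply,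
    ContinuousLinearMap.coe_id', id_eq, smul_eq_mul]
  simp only [inner_sub_left, inner_add_left, real_inner_smul_left]
  try ring

private lemma aux_dipoleL_symm (d : ℕ) (u y v w : E) :
    ⟪dipoleL d u y v, w⟫ = ⟪dipoleL d u y w, v⟫ := by
  rw [aux_dipoleL_apply_inner, aux_dipoleL_apply_inner, real_inner_comm v w]
  ring

private lemma aux_dipoleL_trace (d : ℕ) (u y : EuclideanSpace ℝ (Fin d)) (hy : y ≠ 0) :
    ∑ i : Fin d, ⟪dipoleL d u y (EuclideanSpace.single i 1), EuclideanSpace.single i 1⟫ = 0 := by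
  have hny : ‖y‖ ≠ 0 := norm_ne_zero_iff.mpr hy
  have key : ∀ z z' : EuclideanSpace ℝ (Fin d),
      ∑ i : Fin d, ⟪z, EuclideanSpace.single i 1⟫ * ⟪z', EuclideanSpace.single i 1⟫
        = ⟪z, z'⟫ := by
    intro z z'
    have := (EuclideanSpace.basisFun (Fin d) ℝ).sum_inner_mul_inner z z'
    simp only [EuclideanSpace.basisFun_apply] at this
    rw [← this]
    exact Finset.sum_congr rfl fun i _ => by rw [real_inner_comm z' _]
  have key3 : ∑ i : Fin d, ⟪(EuclideanSpace.single i 1 : EuclideanSpace ℝ (Fin d)),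
      EuclideanSpace.single i 1⟫ = (d : ℝ) := by
    have : ∀ i : Fin d, ⟪(EuclideanSpace.single i 1 : EuclideanSpace ℝ (Fin d)),
        EuclideanSpace.single i 1⟫ = 1 := fun i => by
      simp [EuclideanSpace.inner_single_left]
    simp [this]
  simp only [aux_dipoleL_apply_inner, mul_add, mul_assoc]
  rw [Finset.sum_sub_distrib, Finset.sum_add_distrib, Finset.sum_add_distrib]
  simp only [← Finset.mul_sum]
  rw [key u y, key y u, key y y, key3]
  rw [real_inner_comm u y, real_inner_self_eq_norm_sq]
  field_simp
  ring

end Aux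

/-- A superposition of dipole fields, with intensities `α i`, dipole positions
`p i` outside the closure of the domain and unit directions `dv i`, satisfies
the magnetostatic equations `curl h = 0` (symmetric Jacobian) and `div h = 0`
(traceless Jacobian) on the open set `Ω`. -/
theorem dipole_superposition_magnetostatic (d : ℕ) (hd : 1 ≤ d)
    (Ω : Set (EuclideanSpace ℝ (Fin d))) (hΩ : IsOpen Ω)
    (np : ℕ) (hnp : 1 ≤ np)
    (p : Fin np → EuclideanSpace ℝ (Fin d))
    (hp : ∀ i, p i ∉ closure Ω)
    (dv : Fin np → EuclideanSpace ℝ (Fin d)) (hdv : ∀ i, ‖dv i‖ = 1)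
    (α : Fin np → ℝ)
    (h : EuclideanSpace ℝ (Fin d) → EuclideanSpace ℝ (Fin d))
    (hh : ∀ x, h x = ∑ i : Fin np,
      α i • ((‖x - p i‖ ^ d)⁻¹ •
        ((((d : ℝ) * ⟪x - p i, dv i⟫) / ‖x - p i‖ ^ 2) • (x - p i) - dv i))) :
    ∀ x ∈ Ω,
      (∀ v w : EuclideanSpace ℝ (Fin d),
          ⟪fderiv ℝ h x v, w⟫ = ⟪fderiv ℝ h x w, v⟫) ∧
        ∑ i : Fin d,
          ⟪fderiv ℝ h x (EuclideanSpace.single i 1),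
            EuclideanSpace.single i 1⟫ = 0 := by
  intro x hx
  have hx' : ∀ i, x - p i ≠ 0 := fun i =>
    sub_ne_zero.mpr fun hxp => hp i (hxp ▸ subset_closure hx)
  have hterm : ∀ i : Fin np, HasFDerivAt
      (fun z => α i • ((‖z - p i‖ ^ d)⁻¹ •
        ((((d : ℝ) * ⟪z - p i, dv i⟫) / ‖z - p i‖ ^ 2) • (z - p i) - dv i)))
      (α i • dipoleL d (dv i) (x - p i)) x := by
    intro i
    have h1 := (aux_dipole_hasFDerivAt d hd (dv i) (hx' i)).comp x
      ((hasFDerivAt_id x).sub_const (p i))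
    have h2 := h1.const_smul (α i)
    simpa [Function.comp_def, ContinuousLinearMap.comp_id, Pi.smul_def] using h2
  have hsum : HasFDerivAt h (∑ i : Fin np, α i • dipoleL d (dv i) (x - p i)) x := by
    have hs : HasFDerivAt (fun z => ∑ i : Fin np,
        α i • ((‖z - p i‖ ^ d)⁻¹ •
          ((((d : ℝ) * ⟪z - p i, dv i⟫) / ‖z - p i‖ ^ 2) • (z - p i) - dv i)))
        (∑ i : Fin np, α i • dipoleL d (dv i) (x - p i)) x :=
      HasFDerivAt.fun_sum fun i _ => hterm i
    exact hs.congr_of_eventuallyEq (Filter.Eventually.of_forall hh)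
  have hfd := hsum.fderiv
  rw [hfd]
  constructor
  · intro v w
    simp only [ContinuousLinearMap.sum_apply, sum_inner, ContinuousLinearMap.smul_apply,
      real_inner_smul_left]
    exact Finset.sum_congr rfl fun i _ => by
      rw [aux_dipoleL_symm d (dv i) (x - p i) v w]
  · simp only [ContinuousLinearMap.sum_apply, sum_inner, ContinuousLinearMap.smul_apply,
      real_inner_smul_left]
    rw [Finset.sum_comm]
    refine Finset.sum_eq_zero fun j _ => ?_
    rw [← Finset.mul_sum, aux_dipoleL_trace d (dv j) (x - p j) (hx' j), mul_zero]
end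

section
/- Let d ≥ 1, let U ⊆ ℝ^d be open, let h : U → ℝ^d be twice continuously differentiable with each component harmonic on U, and let [a, b] = Π_{i=1}^d [a_i, b_i] be a closed rectangular box with a_i < b_i contained in U. Then the total outward flux of the Kelvin force f(h) = ∇(‖h‖²) through the boundary of the box is nonnegative: Σ_{i=1}^d ( ∫_{face x_i = b_i} ∂(‖h‖²)/∂x_i − ∫_{face x_i = a_i} ∂(‖h‖²)/∂x_i ) ≥ 0, where each face integral is taken with respect to (d−1)-dimensional Lebesgue measure on the corresponding face of the box. -/
open RealInnerProductSpace MeasureTheory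

/-- The Laplacian of a scalar function on Euclidean space. -/
noncomputable def lap {d : ℕ} (g : EuclideanSpace ℝ (Fin d) → ℝ)
    (x : EuclideanSpace ℝ (Fin d)) : ℝ :=
  ∑ i : Fin d,
    fderiv ℝ (fun y => fderiv ℝ g y (EuclideanSpace.single i 1)) x
      (EuclideanSpace.single i 1)

section Aux

variable {n : ℕ} {U : Set (EuclideanSpace ℝ (Fin (n + 1)))}
  {h : EuclideanSpace ℝ (Fin (n + 1)) → EuclideanSpace ℝ (Fin (n + 1))}

lemma euclid_proj_apply {m : ℕ} (j : Fin m) (x : EuclideanSpace ℝ (Fin m)) :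
    EuclideanSpace.proj j x = x j := rfl

lemma aux_hhd (hU : IsOpen U) (hh : ContDiffOn ℝ 2 h U) {x} (hx : x ∈ U) :
    DifferentiableAt ℝ h x :=
  (hh.differentiableOn two_ne_zero).differentiableAt (hU.mem_nhds hx)

lemma aux_hpd (hU : IsOpen U) (hh : ContDiffOn ℝ 2 h U) {x} (hx : x ∈ U) (j : Fin (n + 1)) :
    HasFDerivAt (fun z => h z j)
      ((EuclideanSpace.proj j).comp (fderiv ℝ h x)) x := by
  have := (EuclideanSpace.proj (𝕜 := ℝ) j).hasFDerivAt.comp x (aux_hhd hU hh hx).hasFDerivAt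
  exact this

lemma aux_hp2 (hh : ContDiffOn ℝ 2 h U) (j : Fin (n + 1)) :
    ContDiffOn ℝ 2 (fun z => h z j) U := by
  have := ContDiffOn.continuousLinearMap_comp (EuclideanSpace.proj (𝕜 := ℝ) j) hh
  exact this

lemma aux_hq1 (hU : IsOpen U) (hh : ContDiffOn ℝ 2 h U) (j i : Fin (n + 1)) :
    ContDiffOn ℝ 1 (fun y => fderiv ℝ (fun z => h z j) y (EuclideanSpace.single i 1)) U := by
  have := ContDiffOn.continuousLinearMap_comp
    (ContinuousLinearMap.apply ℝ ℝ (EuclideanSpace.single (𝕜 := ℝ) i 1))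
    ((aux_hp2 hh j).fderiv_of_isOpen (m := 1) hU (by norm_num))
  exact this

/-- first derivative of the squared norm, in coordinates, on `U`. -/
lemma aux_hFeq (hU : IsOpen U) (hh : ContDiffOn ℝ 2 h U) {x} (hx : x ∈ U) (i : Fin (n + 1)) :
    fderiv ℝ (fun z => ‖h z‖ ^ 2) x (EuclideanSpace.single i 1) =
      ∑ j, 2 * (h x j * fderiv ℝ (fun z => h z j) x (EuclideanSpace.single i 1)) := by
  have hgd : HasFDerivAt (fun z => ‖h z‖ ^ 2)
      (2 • (innerSL ℝ (h x)).comp (fderiv ℝ h x)) x :=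
    (aux_hhd hU hh hx).hasFDerivAt.norm_sq
  rw [hgd.fderiv]
  have hinner : (inner ℝ (h x) (fderiv ℝ h x (EuclideanSpace.single i 1)) : ℝ)
      = ∑ j, h x j * fderiv ℝ h x (EuclideanSpace.single i 1) j := by
    rw [PiLp.inner_apply]
    simp [RCLike.inner_apply, conj_trivial]
    exact Finset.sum_congr rfl fun _ _ => mul_comm _ _
  simp only [ContinuousLinearMap.smul_apply, ContinuousLinearMap.comp_apply, innerSL_apply_apply,
    smul_eq_mul, hinner]
  rw [Finset.smul_sum]
  refine Finset.sum_congr rfl fun j _ => ?_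
  rw [(aux_hpd hU hh hx j).fderiv]
  simp only [ContinuousLinearMap.comp_apply, euclid_proj_apply, nsmul_eq_mul]
  push_cast
  ring

/-- second derivative of the squared norm, in coordinates. -/
lemma aux_key (hU : IsOpen U) (hh : ContDiffOn ℝ 2 h U) {x} (hx : x ∈ U) (i : Fin (n + 1)) :
    fderiv ℝ (fun y => fderiv ℝ (fun z => ‖h z‖ ^ 2) y (EuclideanSpace.single i 1)) x
        (EuclideanSpace.single i 1) =
      ∑ j, (2 * (fderiv ℝ (fun z => h z j) x (EuclideanSpace.single i 1)) ^ 2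
        + 2 * h x j *
            fderiv ℝ (fun y => fderiv ℝ (fun z => h z j) y (EuclideanSpace.single i 1)) x
              (EuclideanSpace.single i 1)) := by
  have hqd : ∀ j : Fin (n + 1), DifferentiableAt ℝ
      (fun y => fderiv ℝ (fun z => h z j) y (EuclideanSpace.single i 1)) x :=
    fun j => ((aux_hq1 hU hh j i).differentiableOn one_ne_zero).differentiableAt (hU.mem_nhds hx)
  have hform : HasFDerivAt
      (fun y => ∑ j, 2 * (h y j * fderiv ℝ (fun z => h z j) y (EuclideanSpace.single i 1)))
      (∑ j, (2:ℝ) • (h x j •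
          fderiv ℝ (fun y => fderiv ℝ (fun z => h z j) y (EuclideanSpace.single i 1)) x
        + fderiv ℝ (fun z => h z j) x (EuclideanSpace.single i 1) •
            ((EuclideanSpace.proj j).comp (fderiv ℝ h x)))) x :=
    HasFDerivAt.fun_sum fun j _ =>
      ((aux_hpd hU hh hx j).mul (hqd j).hasFDerivAt).const_mul 2
  have heq : (fun y => fderiv ℝ (fun z => ‖h z‖ ^ 2) y (EuclideanSpace.single i 1))
      =ᶠ[nhds x]
      (fun y => ∑ j, 2 * (h y j * fderiv ℝ (fun z => h z j) y (EuclideanSpace.single i 1))) :=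
    Filter.eventuallyEq_of_mem (hU.mem_nhds hx) fun y hy => aux_hFeq hU hh hy i
  rw [heq.fderiv_eq, hform.fderiv]
  simp only [ContinuousLinearMap.sum_apply, ContinuousLinearMap.smul_apply,
    ContinuousLinearMap.add_apply, ContinuousLinearMap.comp_apply,
    euclid_proj_apply, smul_eq_mul]
  refine Finset.sum_congr rfl fun j _ => ?_
  rw [(aux_hpd hU hh hx j).fderiv]
  simp only [ContinuousLinearMap.comp_apply, euclid_proj_apply]
  ring

end Aux

/-- Earnshaw-type inequality: if `h` is a `C²` vector field with harmonic
components on an open set `U ⊆ ℝ^d` (`d = n+1 ≥ 1`) and `[a,b] ⊆ U` is a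
closed box with nonempty interior, then the total outward flux of the Kelvin
force `f(h) = ∇(‖h‖²)` through the boundary of the box, i.e. the sum over `i`
of the integrals of `∂(‖h‖²)/∂xᵢ` over the face `xᵢ = bᵢ` minus the integrals
over the face `xᵢ = aᵢ`, is nonnegative. -/
theorem kelvin_force_box_flux_nonneg (n : ℕ)
    (U : Set (EuclideanSpace ℝ (Fin (n + 1)))) (hU : IsOpen U)
    (h : EuclideanSpace ℝ (Fin (n + 1)) → EuclideanSpace ℝ (Fin (n + 1)))
    (hh : ContDiffOn ℝ 2 h U)
    (hharm : ∀ x ∈ U, ∀ i : Fin (n + 1), lap (fun y => h y i) x = 0)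
    (a b : EuclideanSpace ℝ (Fin (n + 1))) (hab : ∀ i, a i < b i)
    (hbox : {y : EuclideanSpace ℝ (Fin (n + 1)) |
        ∀ i, a i ≤ y i ∧ y i ≤ b i} ⊆ U) :
    0 ≤ ∑ i : Fin (n + 1),
        ((∫ x in Set.Icc (fun j => a (i.succAbove j)) (fun j => b (i.succAbove j)),
            fderiv ℝ (fun y => ‖h y‖ ^ 2) (WithLp.toLp 2 (i.insertNth (b i) x : Fin (n + 1) → ℝ))
              (EuclideanSpace.single i 1))
          - ∫ x in Set.Icc (fun j => a (i.succAbove j)) (fun j => b (i.succAbove j)),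
              fderiv ℝ (fun y => ‖h y‖ ^ 2) (WithLp.toLp 2 (i.insertNth (a i) x : Fin (n + 1) → ℝ))
                (EuclideanSpace.single i 1)) := by
  classical
  -- the box in the pi world
  set a' : Fin (n + 1) → ℝ := fun i => a i with ha'
  set b' : Fin (n + 1) → ℝ := fun i => b i with hb'
  have hIccU : ∀ y ∈ Set.Icc a' b', WithLp.toLp 2 y ∈ U := by
    intro y hy
    exact hbox fun i => ⟨hy.1 i, hy.2 i⟩
  -- the flux density functions
  set F : Fin (n + 1) → EuclideanSpace ℝ (Fin (n + 1)) → ℝ :=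
    fun i y => fderiv ℝ (fun y => ‖h y‖ ^ 2) y (EuclideanSpace.single i 1) with hF_def
  have hg2 : ContDiffOn ℝ 2 (fun y : EuclideanSpace ℝ (Fin (n + 1)) => ‖h y‖ ^ 2) U := by
    have := (contDiff_norm_sq (𝕜 := ℝ) (E := EuclideanSpace ℝ (Fin (n + 1)))).comp_contDiffOn hh
    exact this
  have hgd1 : ContDiffOn ℝ 1 (fderiv ℝ (fun y : EuclideanSpace ℝ (Fin (n + 1)) => ‖h y‖ ^ 2)) U :=
    hg2.fderiv_of_isOpen hU (by norm_num)
  have hF1 : ∀ i, ContDiffOn ℝ 1 (F i) U := by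
    intro i
    have := ContDiffOn.continuousLinearMap_comp
      (ContinuousLinearMap.apply ℝ ℝ (EuclideanSpace.single (𝕜 := ℝ) i 1)) hgd1
    exact this
  have hFd : ∀ x ∈ U, ∀ i, HasFDerivAt (F i) (fderiv ℝ (F i) x) x := fun x hx i =>
    (((hF1 i).differentiableOn one_ne_zero).differentiableAt (hU.mem_nhds hx)).hasFDerivAt
  -- divergence and its nonnegativity
  have hdiv_eq : ∀ x ∈ U,
      ∑ i, fderiv ℝ (F i) x (EuclideanSpace.single i 1) =
        ∑ j, ∑ i, 2 * (fderiv ℝ (fun z => h z j) x (EuclideanSpace.single i 1)) ^ 2 := by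
    intro x hx
    rw [Finset.sum_congr rfl fun i _ => aux_key hU hh hx i, Finset.sum_comm]
    refine Finset.sum_congr rfl fun j _ => ?_
    have hl : ∑ i, fderiv ℝ
        (fun y => fderiv ℝ (fun z => h z j) y (EuclideanSpace.single i 1)) x
          (EuclideanSpace.single i 1) = 0 := hharm x hx j
    have h2 : ∑ i, 2 * h x j * fderiv ℝ
        (fun y => fderiv ℝ (fun z => h z j) y (EuclideanSpace.single i 1)) x
          (EuclideanSpace.single i 1) = 0 := by
      rw [← Finset.mul_sum, hl, mul_zero]
    rw [Finset.sum_add_distrib, h2, add_zero]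
  have hdiv_nonneg : ∀ x ∈ U, 0 ≤ ∑ i, fderiv ℝ (F i) x (EuclideanSpace.single i 1) := by
    intro x hx
    rw [hdiv_eq x hx]
    positivity
  have hdiv_cont : ContinuousOn
      (fun x => ∑ i, fderiv ℝ (F i) x (EuclideanSpace.single i 1)) U :=
    continuousOn_finset_sum _ fun i _ =>
      (ContinuousLinearMap.apply ℝ ℝ
        (EuclideanSpace.single (𝕜 := ℝ) i 1)).continuous.comp_continuousOn
        ((hF1 i).continuousOn_fderiv_of_isOpen hU le_rfl)
  -- move to the pi world
  set eE : (Fin (n + 1) → ℝ) →L[ℝ] EuclideanSpace ℝ (Fin (n + 1)) :=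
    ((PiLp.continuousLinearEquiv 2 ℝ (fun _ : Fin (n + 1) => ℝ)).symm :
      (Fin (n + 1) → ℝ) ≃L[ℝ] EuclideanSpace ℝ (Fin (n + 1))).toContinuousLinearMap with heE_def
  have hle : a' ≤ b' := fun i => (hab i).le
  have Hc : ∀ i, ContinuousOn (fun y : Fin (n + 1) → ℝ => F i (WithLp.toLp 2 y)) (Set.Icc a' b') := by
    intro i
    exact ((hF1 i).continuousOn).comp (PiLp.continuous_toLp 2 _).continuousOn hIccU
  have Hd : ∀ x ∈ (Set.pi Set.univ fun i => Set.Ioo (a' i) (b' i)) \ (∅ : Set (Fin (n + 1) → ℝ)),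
      ∀ i, HasFDerivAt (fun y : Fin (n + 1) → ℝ => F i (WithLp.toLp 2 y))
          ((fderiv ℝ (F i) (WithLp.toLp 2 x)).comp eE) x := by
    intro x hx i
    have hxU : WithLp.toLp 2 x ∈ U := by
      refine hIccU _ ?_
      rcases hx with ⟨hx, -⟩
      exact ⟨fun j => (hx j trivial).1.le, fun j => (hx j trivial).2.le⟩
    exact (hFd _ hxU i).comp x eE.hasFDerivAt
  have Hi : IntegrableOn
      (fun x : Fin (n + 1) → ℝ => ∑ i, ((fderiv ℝ (F i) (WithLp.toLp 2 x)).comp eE) (Pi.single i 1))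
      (Set.Icc a' b') volume := by
    have hc : ContinuousOn
        (fun x : Fin (n + 1) → ℝ => ∑ i, ((fderiv ℝ (F i) (WithLp.toLp 2 x)).comp eE) (Pi.single i 1))
        (Set.Icc a' b') := hdiv_cont.comp (PiLp.continuous_toLp 2 _).continuousOn hIccU
    exact hc.integrableOn_compact isCompact_Icc
  have key := integral_divergence_of_hasFDerivAt_off_countable' a' b' hle
    (fun i (y : Fin (n + 1) → ℝ) => F i (WithLp.toLp 2 y))
    (fun i (x : Fin (n + 1) → ℝ) => (fderiv ℝ (F i) (WithLp.toLp 2 x)).comp eE)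
    ∅ Set.countable_empty Hc Hd Hi
  have hnonneg : 0 ≤ ∫ x in Set.Icc a' b',
      ∑ i, ((fderiv ℝ (F i) (WithLp.toLp 2 x)).comp eE) (Pi.single i 1) := by
    refine setIntegral_nonneg measurableSet_Icc fun x hx => ?_
    exact hdiv_nonneg _ (hIccU x hx)
  exact le_of_le_of_eq hnonneg key
end
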